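/- The set {u ∈ [0,1] : B̄_𝑁(u) = 0} is nonempty; its least element ρ₀ satisfies ρ₀ < 1, and the derivative of B̄_𝑁 at ρ₀ is negative: Σ_{j∉𝑁, j≥1} j·b_j·ρ₀^{j−1} < 0. -/

import Mathlib

/-- Convexity-type inequality: for `0 ≤ ρ ≤ 1` and `1 ≤ n`,
`n * ρ^(n-1) * (1 - ρ) ≤ 1 - ρ^n`. -/
lemma aux_pow_ineq (ρ : ℝ) (h0 : 0 ≤ ρ) (h1 : ρ ≤ 1) (n : ℕ) (hn : 1 ≤ n) :
    (n : ℝ) * ρ ^ (n - 1) * (1 - ρ) ≤ 1 - ρ ^ n := by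
  have key : (n : ℝ) * ρ ^ (n - 1) ≤ ∑ i ∈ Finset.range n, ρ ^ i := by
    have h : ∀ i ∈ Finset.range n, ρ ^ (n - 1) ≤ ρ ^ i := by
      intro i hi
      exact pow_le_pow_of_le_one h0 h1 (by have := Finset.mem_range.mp hi; omega)
    calc (n : ℝ) * ρ ^ (n - 1) = ∑ _i ∈ Finset.range n, ρ ^ (n - 1) := by
          simp [Finset.sum_const, mul_comm]
      _ ≤ ∑ i ∈ Finset.range n, ρ ^ i := Finset.sum_le_sum h
  have geom : (∑ i ∈ Finset.range n, ρ ^ i) * (ρ - 1) = ρ ^ n - 1 := geom_sum_mul ρ n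
  nlinarith [key, geom, sub_nonneg.mpr h1]

set_option maxHeartbeats 1000000 in
/-- The set `{u ∈ [0,1] : B̄_N(u) = 0}` is nonempty; its least element `ρ₀`
satisfies `ρ₀ < 1`, and the derivative of `B̄_N` at `ρ₀` is negative:
`Σ_{j∉N, j≥1} j·b_j·ρ₀^{j−1} < 0`. -/
theorem stmt_3
    (b : ℕ → ℝ)
    (hb_nonneg : ∀ j : ℕ, j ≠ 1 → 0 ≤ b j)
    (hb1 : b 1 < 0)
    (hb_sum : HasSum (fun j : ℕ => if j = 1 then 0 else b j) (-(b 1)))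
    (N : Finset ℕ) (hN : N.Nonempty) (h1N : (1 : ℕ) ∉ N)
    (hbN : ∀ k ∈ N, 0 < b k) :
    ∃ ρ₀ d : ℝ,
      IsLeast {u : ℝ | u ∈ Set.Icc (0 : ℝ) 1 ∧
          (∑' j : ℕ, if j ∈ N then 0 else b j * u ^ j) = 0} ρ₀ ∧
      ρ₀ < 1 ∧
      HasSum (fun j : ℕ =>
        if j ∉ N ∧ 1 ≤ j then (j : ℝ) * b j * ρ₀ ^ (j - 1) else 0) d ∧
      d < 0 := by
  -- basic summability facts
  have hb : HasSum b 0 := by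
    have h2 : HasSum (fun j : ℕ => if j = 1 then b 1 else 0) (b 1) := hasSum_ite_eq 1 (b 1)
    have := hb_sum.add h2
    simpa using this.congr_fun (by intro j; by_cases h : j = 1 <;> simp [h])
  have habs : Summable (fun j : ℕ => |b j|) := by
    have h2 : HasSum (fun j : ℕ => if j = 1 then -b 1 else 0) (-b 1) := hasSum_ite_eq 1 (-b 1)
    refine (hb_sum.add h2).summable.congr fun j => ?_
    by_cases h : j = 1
    · simp [h, abs_of_nonpos hb1.le]
    · simp [h, abs_of_nonneg (hb_nonneg j h)]
  -- the function F
  set F : ℝ → ℝ := fun u => ∑' j : ℕ, if j ∈ N then 0 else b j * u ^ j with hF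
  have hsummable : ∀ u : ℝ, u ∈ Set.Icc (0 : ℝ) 1 →
      Summable (fun j : ℕ => if j ∈ N then 0 else b j * u ^ j) := by
    intro u hu
    refine Summable.of_norm_bounded habs fun j => ?_
    by_cases h : j ∈ N
    · simp [h, abs_nonneg]
    · simp only [h, if_false, Real.norm_eq_abs, abs_mul, abs_pow]
      calc |b j| * |u| ^ j ≤ |b j| * 1 := by
            refine mul_le_mul_of_nonneg_left ?_ (abs_nonneg _)
            exact pow_le_one₀ (abs_nonneg u) (abs_le.mpr ⟨by linarith [hu.1], hu.2⟩)
        _ = |b j| := mul_one _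
  -- F is continuous on Icc 0 1
  have hcont : ContinuousOn F (Set.Icc (0 : ℝ) 1) := by
    rw [continuousOn_iff_continuous_restrict]
    refine continuous_tsum (f := fun (j : ℕ) (x : Set.Icc (0:ℝ) 1) =>
      if j ∈ N then 0 else b j * (x : ℝ) ^ j) (u := fun j => |b j|) ?_ habs ?_
    · intro j
      by_cases h : j ∈ N <;> simp only [h, if_true, if_false]
      · exact continuous_const
      · exact continuous_const.mul ((continuous_subtype_val).pow j)
    · intro j x
      by_cases h : j ∈ N
      · simp [h, abs_nonneg]
      · simp only [h, if_false, Real.norm_eq_abs, abs_mul, abs_pow]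
        calc |b j| * |(x:ℝ)| ^ j ≤ |b j| * 1 := by
              refine mul_le_mul_of_nonneg_left ?_ (abs_nonneg _)
              exact pow_le_one₀ (abs_nonneg _) (abs_le.mpr ⟨by linarith [x.2.1], x.2.2⟩)
          _ = |b j| := mul_one _
  -- value at 1
  have hNsum : HasSum (fun j : ℕ => if j ∈ N then b j else 0) (∑ k ∈ N, b k) := by
    have h := hasSum_sum_of_ne_finset_zero (s := N) (L := SummationFilter.unconditional ℕ)
      (f := fun j : ℕ => if j ∈ N then b j else 0) (by intro j hj; simp [hj])
    have heq : (∑ k ∈ N, (if k ∈ N then b k else 0)) = ∑ k ∈ N, b k :=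
      Finset.sum_congr rfl fun k hk => by simp [hk]
    rwa [heq] at h
  have hNpos : 0 < ∑ k ∈ N, b k := Finset.sum_pos hbN hN
  have hF1sum : HasSum (fun j : ℕ => if j ∈ N then 0 else b j) (-(∑ k ∈ N, b k)) := by
    have := hb.sub hNsum
    simpa using this.congr_fun (by intro j; by_cases h : j ∈ N <;> simp [h])
  have hF1 : F 1 = -(∑ k ∈ N, b k) := by
    rw [hF]
    simpa using hF1sum.tsum_eq
  have hF1neg : F 1 < 0 := by rw [hF1]; linarith
  -- value at 0
  have hF0 : 0 ≤ F 0 := by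
    have heq : (fun j : ℕ => if j ∈ N then 0 else b j * (0:ℝ) ^ j) =
        (fun j : ℕ => if j = 0 then (if 0 ∈ N then 0 else b 0) else 0) := by
      funext j
      by_cases hj0 : j = 0
      · subst hj0; by_cases h : 0 ∈ N <;> simp [h]
      · have hz : (0:ℝ) ^ j = 0 := zero_pow hj0
        by_cases h : j ∈ N <;> simp [h, hz, hj0]
    rw [hF]
    simp only [heq, tsum_ite_eq]
    by_cases h : 0 ∈ N
    · simp [h]
    · simp [h, hb_nonneg 0 (by omega)]
  -- the zero set
  set S : Set ℝ := {u : ℝ | u ∈ Set.Icc (0 : ℝ) 1 ∧ F u = 0} with hS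
  have hSeq : S = Set.Icc (0:ℝ) 1 ∩ F ⁻¹' {0} := by
    ext u; exact Iff.rfl
  have hSclosed : IsClosed S := by
    rw [hSeq]
    exact hcont.preimage_isClosed_of_isClosed isClosed_Icc isClosed_singleton
  have hSsub : S ⊆ Set.Icc (0:ℝ) 1 := fun u hu => hu.1
  have hScompact : IsCompact S := isCompact_Icc.of_isClosed_subset hSclosed hSsub
  -- nonemptiness via IVT
  have hSne : S.Nonempty := by
    have h01 : (0:ℝ) ≤ 1 := zero_le_one
    have := intermediate_value_Icc' h01 hcont
    have hmem : (0:ℝ) ∈ Set.Icc (F 1) (F 0) := ⟨hF1neg.le, hF0⟩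
    obtain ⟨c, hc, hfc⟩ := this hmem
    exact ⟨c, hc, hfc⟩
  obtain ⟨ρ₀, hρ₀⟩ := hScompact.exists_isLeast hSne
  have hρmem : ρ₀ ∈ Set.Icc (0:ℝ) 1 := hρ₀.1.1
  have hρzero : F ρ₀ = 0 := hρ₀.1.2
  have hρlt1 : ρ₀ < 1 := by
    rcases lt_or_eq_of_le hρmem.2 with h | h
    · exact h
    · exfalso; rw [h] at hρzero; rw [hρzero] at hF1neg; exact lt_irrefl 0 hF1neg
  have hρ0 : 0 ≤ ρ₀ := hρmem.1
  -- summability of the derivative series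
  set g : ℕ → ℝ := fun j => if j ∉ N ∧ 1 ≤ j then (j : ℝ) * b j * ρ₀ ^ (j - 1) else 0 with hg
  have hM : ∀ j, |b j| ≤ ∑' i, |b i| := fun j => Summable.le_tsum habs j fun i _ => abs_nonneg _
  have hMnn : 0 ≤ ∑' i, |b i| := tsum_nonneg fun i => abs_nonneg _
  have hgsummable : Summable g := by
    rw [← summable_nat_add_iff 1]
    have hgeo : Summable (fun n : ℕ => (∑' i, |b i|) * ((n + 1 : ℝ) * ρ₀ ^ n)) := by
      apply Summable.mul_left
      have hρnorm : ‖ρ₀‖ < 1 := by rw [Real.norm_eq_abs, abs_of_nonneg hρ0]; exact hρlt1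
      have h1 : Summable (fun n : ℕ => (n : ℝ) ^ 1 * ρ₀ ^ n) :=
        summable_pow_mul_geometric_of_norm_lt_one 1 hρnorm
      have h2 : Summable (fun n : ℕ => ρ₀ ^ n) := summable_geometric_of_lt_one hρ0 hρlt1
      exact (h1.add h2).congr fun n => by push_cast; ring
    refine Summable.of_norm_bounded hgeo fun n => ?_
    rw [hg]
    beta_reduce
    by_cases h : (n + 1) ∉ N ∧ 1 ≤ n + 1
    · rw [if_pos h, Real.norm_eq_abs]
      have hc : |(↑(n+1):ℝ) * b (n+1) * ρ₀ ^ (n+1-1)| = ((n:ℝ)+1) * |b (n+1)| * ρ₀ ^ n := by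
        rw [abs_mul, abs_mul, abs_pow, abs_of_nonneg hρ0, Nat.add_sub_cancel, Nat.abs_cast]
        push_cast; ring
      rw [hc]
      calc ((n:ℝ) + 1) * |b (n+1)| * ρ₀ ^ n
          ≤ ((n:ℝ) + 1) * (∑' i, |b i|) * ρ₀ ^ n := by
            apply mul_le_mul_of_nonneg_right _ (pow_nonneg hρ0 n)
            exact mul_le_mul_of_nonneg_left (hM _) (by positivity)
        _ = (∑' i, |b i|) * ((n + 1 : ℝ) * ρ₀ ^ n) := by ring
    · rw [if_neg h, norm_zero]
      positivity
  set d : ℝ := ∑' j, g j with hd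
  have hgd : HasSum g d := hgsummable.hasSum
  -- key inequality: d * (1 - ρ₀) ≤ F 1
  have hterm2 : HasSum (fun j : ℕ => if j ∈ N then 0 else b j * ρ₀ ^ j) 0 := by
    have hs := (hsummable ρ₀ hρmem).hasSum
    rwa [show (∑' j : ℕ, if j ∈ N then 0 else b j * ρ₀ ^ j) = F ρ₀ from rfl, hρzero] at hs
  have hr : HasSum (fun j : ℕ => (if j ∈ N then 0 else b j) -
      (if j ∈ N then 0 else b j * ρ₀ ^ j)) (-(∑ k ∈ N, b k)) := by
    simpa using hF1sum.sub hterm2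
  have hl : HasSum (fun j : ℕ => g j * (1 - ρ₀)) (d * (1 - ρ₀)) := hgd.mul_right _
  have hle : d * (1 - ρ₀) ≤ -(∑ k ∈ N, b k) := by
    refine hasSum_le (fun j => ?_) hl hr
    rw [hg]
    beta_reduce
    by_cases hjN : j ∈ N
    · simp [hjN]
    · rcases Nat.eq_zero_or_pos j with h0 | h0
      · subst h0; simp [hjN]
      · have hcond : j ∉ N ∧ 1 ≤ j := ⟨hjN, h0⟩
        rw [if_pos hcond, if_neg hjN, if_neg hjN]
        rcases eq_or_lt_of_le (show 1 ≤ j from h0) with h1 | h1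
        · -- j = 1
          have hj1 : j = 1 := h1.symm
          subst hj1
          have : ((1:ℕ):ℝ) * b 1 * ρ₀ ^ (1-1) * (1 - ρ₀) = b 1 - b 1 * ρ₀ ^ 1 := by
            norm_num; ring
          exact le_of_eq this
        · -- j ≥ 2, b j ≥ 0
          have hbj : 0 ≤ b j := hb_nonneg j (by omega)
          have hineq := aux_pow_ineq ρ₀ hρ0 hρlt1.le j h0
          calc (j : ℝ) * b j * ρ₀ ^ (j - 1) * (1 - ρ₀)
              = b j * ((j : ℝ) * ρ₀ ^ (j - 1) * (1 - ρ₀)) := by ring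
            _ ≤ b j * (1 - ρ₀ ^ j) := mul_le_mul_of_nonneg_left hineq hbj
            _ = b j - b j * ρ₀ ^ j := by ring
  have hdneg : d < 0 := by
    have h1ρ : 0 < 1 - ρ₀ := by linarith
    nlinarith
  exact ⟨ρ₀, d, hρ₀, hρlt1, hgd, hdneg⟩
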